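/- For α ∈ (1/2, 1), the second derivative of t ↦ log( x^{α−1}/(x^{2α} + 2x^α cos(πα) + 1) ) evaluated at x = e^t equals −4α²(1 + cos(πα)cosh(αt))/(e^{αt} + 2cos(πα) + e^{−αt})², and this expression is positive for |t| large enough; hence the density f_{Y_α}(x) = (sin(πα)/π) x^{α−1}/(x^{2α}+2x^α cos(πα)+1) is not hyperbolically monotone when α > 1/2. -/

import Mathlib

open Real

noncomputable def Dexpr (α t : ℝ) : ℝ :=
  -4 * α ^ 2 * (1 + Real.cos (Real.pi * α) * Real.cosh (α * t)) /
    (Real.exp (α * t) + 2 * Real.cos (Real.pi * α) + Real.exp (-(α * t))) ^ 2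

noncomputable def Efun (α : ℝ) : ℝ → ℝ :=
  fun s => Real.exp (α * s) + 2 * Real.cos (Real.pi * α) + Real.exp (-(α * s))

theorem Epos {α : ℝ} (hc : -1 < Real.cos (Real.pi * α)) (s : ℝ) : 0 < Efun α s := by
  have h1 : Real.cosh (α * s) = (Real.exp (α*s) + Real.exp (-(α*s))) / 2 := Real.cosh_eq _
  have h2 : (1:ℝ) ≤ Real.cosh (α * s) := Real.one_le_cosh _
  simp only [Efun]
  nlinarith

theorem frac_eq {α : ℝ} (_hc : -1 < Real.cos (Real.pi * α)) (s : ℝ) :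
    (Real.exp s) ^ (α - 1) /
      ((Real.exp s) ^ (2 * α) + 2 * (Real.exp s) ^ α * Real.cos (Real.pi * α) + 1)
    = Real.exp (-s) / Efun α s := by
  have hr : ∀ y : ℝ, (Real.exp s) ^ y = Real.exp (s * y) := by
    intro y
    rw [Real.rpow_def_of_pos (Real.exp_pos s), Real.log_exp]
  rw [hr, hr, hr]
  have hden : Real.exp (s * (2*α)) + 2 * Real.exp (s * α) * Real.cos (Real.pi * α) + 1
      = Real.exp (s * α) * Efun α s := by
    simp only [Efun]
    rw [mul_add, mul_add, ← Real.exp_add, ← Real.exp_add]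
    ring_nf
    rw [Real.exp_zero]
    ring
  rw [hden]
  have hnum : Real.exp (s * (α - 1)) = Real.exp (-s) * Real.exp (s * α) := by
    rw [← Real.exp_add]; ring_nf
  rw [hnum, mul_comm (Real.exp (s*α)) (Efun α s), mul_div_mul_right _ _ (Real.exp_ne_zero _)]

noncomputable def G1fun (α : ℝ) : ℝ → ℝ :=
  fun s => -1 - (α * Real.exp (α * s) - α * Real.exp (-(α * s))) / Efun α s

theorem hasDerivE (α : ℝ) (s : ℝ) :
    HasDerivAt (Efun α) (α * Real.exp (α * s) - α * Real.exp (-(α * s))) s := by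
  have h1 : HasDerivAt (fun x : ℝ => Real.exp (α * x)) (Real.exp (α * s) * α) s :=
    (Real.hasDerivAt_exp (α * s)).comp s (by simpa using (hasDerivAt_id s).const_mul α)
  have h2 : HasDerivAt (fun x : ℝ => Real.exp (-(α * x))) (Real.exp (-(α * s)) * (-α)) s :=
    by
      have hi : HasDerivAt (fun x : ℝ => -(α * x)) (-α) s := by
        have := ((hasDerivAt_id' s).const_mul α).neg; simp only [mul_one] at this; exact this
      exact (Real.hasDerivAt_exp (-(α * s))).comp s hi
  have := (h1.add_const (2 * Real.cos (Real.pi * α))).add h2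
  exact this.congr_deriv (by ring)

theorem hasDerivG {α : ℝ} (hc : -1 < Real.cos (Real.pi * α)) (s : ℝ) :
    HasDerivAt (fun s => -s - Real.log (Efun α s)) (G1fun α s) s := by
  have h := ((hasDerivE α s).log (Epos hc s).ne')
  have := ((hasDerivAt_id' s).neg).sub h
  exact this

theorem hasDerivG1 {α : ℝ} (hc : -1 < Real.cos (Real.pi * α)) (t : ℝ) :
    HasDerivAt (G1fun α) (Dexpr α t) t := by
  have hE := hasDerivE α t
  have h1 : HasDerivAt (fun x : ℝ => Real.exp (α * x)) (Real.exp (α * t) * α) t :=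
    (Real.hasDerivAt_exp (α * t)).comp t (by simpa using (hasDerivAt_id t).const_mul α)
  have h2 : HasDerivAt (fun x : ℝ => Real.exp (-(α * x))) (Real.exp (-(α * t)) * (-α)) t :=
    by
      have hi : HasDerivAt (fun x : ℝ => -(α * x)) (-α) t := by
        have := ((hasDerivAt_id' t).const_mul α).neg; simp only [mul_one] at this; exact this
      exact (Real.hasDerivAt_exp (-(α * t))).comp t hi
  have hN : HasDerivAt (fun x : ℝ => α * Real.exp (α * x) - α * Real.exp (-(α * x)))
      (α ^ 2 * Real.exp (α * t) + α ^ 2 * Real.exp (-(α * t))) t := by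
    have := (h1.const_mul α).sub (h2.const_mul α)
    exact this.congr_deriv (by ring)
  have hq := hN.div hE (Epos hc t).ne'
  have hfin := hq.const_sub (-1 : ℝ)
  have : G1fun α = fun s => -1 - (α * Real.exp (α * s) - α * Real.exp (-(α * s))) / Efun α s := rfl
  rw [this]
  refine hfin.congr_deriv ?_
  symm
  have hEne : Efun α t ≠ 0 := (Epos hc t).ne'
  have hmul : Real.exp (α * t) * Real.exp (-(α * t)) = 1 := by
    rw [← Real.exp_add]; simp
  have hch : Real.cosh (α * t) = (Real.exp (α*t) + Real.exp (-(α*t))) / 2 := Real.cosh_eq _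
  unfold Dexpr
  rw [hch, ← neg_div]
  have hEdef : (Real.exp (α*t) + 2*Real.cos (Real.pi*α) + Real.exp (-(α*t))) = Efun α t := rfl
  rw [hEdef]
  congr 1
  simp only [Efun]
  linear_combination (4*α^2) * hmul

theorem Yalpha_not_HM (α : ℝ) (hα : α ∈ Set.Ioo (1/2 : ℝ) 1) :
    (∀ t : ℝ,
      deriv (deriv (fun s : ℝ => Real.log
        ((Real.exp s) ^ (α - 1) /
          ((Real.exp s) ^ (2 * α) + 2 * (Real.exp s) ^ α * Real.cos (Real.pi * α) + 1)))) t
        = Dexpr α t) ∧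
    (∃ T : ℝ, ∀ t : ℝ, T ≤ |t| → 0 < Dexpr α t) ∧
    ¬ ConcaveOn ℝ Set.univ (fun t : ℝ => Real.log
        (Real.sin (Real.pi * α) / Real.pi * (Real.exp t) ^ (α - 1) /
          ((Real.exp t) ^ (2 * α) + 2 * (Real.exp t) ^ α * Real.cos (Real.pi * α) + 1))) := by
  obtain ⟨hα1, hα2⟩ := hα
  have hαpos : 0 < α := by linarith
  have hpi := Real.pi_pos
  have hc0 : Real.cos (Real.pi * α) < 0 := by
    apply Real.cos_neg_of_pi_div_two_lt_of_lt
    · nlinarith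
    · nlinarith
  have hc1 : -1 < Real.cos (Real.pi * α) := by
    have h := Real.cos_lt_cos_of_nonneg_of_le_pi (by positivity : (0:ℝ) ≤ Real.pi * α)
      le_rfl (by nlinarith : Real.pi * α < Real.pi)
    rwa [Real.cos_pi] at h
  -- the function of part 1 equals  s ↦ -s - log (Efun α s)
  have hfG : (fun s : ℝ => Real.log
        ((Real.exp s) ^ (α - 1) /
          ((Real.exp s) ^ (2 * α) + 2 * (Real.exp s) ^ α * Real.cos (Real.pi * α) + 1)))
      = fun s => -s - Real.log (Efun α s) := by
    funext s
    rw [frac_eq hc1 s, Real.log_div (Real.exp_ne_zero _) (Epos hc1 s).ne', Real.log_exp]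
  have hGderiv : deriv (fun s : ℝ => -s - Real.log (Efun α s)) = G1fun α :=
    funext fun s => (hasDerivG hc1 s).deriv
  -- part 2 claim, proved first for reuse
  have hDpos : ∀ t : ℝ, 2 * Real.log (4 / (-Real.cos (Real.pi * α))) ≤ |t| → 0 < Dexpr α t := by
    intro t ht
    have hcpos : 0 < -Real.cos (Real.pi * α) := by linarith
    have h4c : (0:ℝ) < 4 / (-Real.cos (Real.pi * α)) := by positivity
    have hcosh : 2 / (-Real.cos (Real.pi * α)) ≤ Real.cosh (α * t) := by
      have e1 : Real.cosh (α * t) = Real.cosh (α * |t|) := by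
        rw [← Real.cosh_abs, abs_mul, abs_of_pos hαpos]
      have e2 : Real.exp (α * |t|) / 2 ≤ Real.cosh (α * |t|) := by
        rw [Real.cosh_eq]
        have := Real.exp_pos (-(α * |t|))
        linarith
      have e3 : Real.exp (|t| / 2) ≤ Real.exp (α * |t|) :=
        Real.exp_le_exp.2 (by nlinarith [abs_nonneg t])
      have e4 : 4 / (-Real.cos (Real.pi * α)) ≤ Real.exp (|t| / 2) := by
        have h5 : Real.exp (Real.log (4 / (-Real.cos (Real.pi * α)))) ≤ Real.exp (|t| / 2) :=
          Real.exp_le_exp.2 (by linarith)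
        rwa [Real.exp_log h4c] at h5
      rw [e1]
      calc 2 / (-Real.cos (Real.pi * α)) = (4 / (-Real.cos (Real.pi * α))) / 2 := by ring
        _ ≤ Real.exp (|t| / 2) / 2 := by linarith
        _ ≤ Real.exp (α * |t|) / 2 := by linarith
        _ ≤ Real.cosh (α * |t|) := e2
    have hnum : 1 + Real.cos (Real.pi * α) * Real.cosh (α * t) ≤ -1 := by
      have hle : Real.cos (Real.pi * α) * Real.cosh (α * t)
          ≤ Real.cos (Real.pi * α) * (2 / (-Real.cos (Real.pi * α))) :=
        mul_le_mul_of_nonpos_left hcosh (le_of_lt hc0)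
      have h2 : Real.cos (Real.pi * α) * (2 / (-Real.cos (Real.pi * α))) = -2 := by
        field_simp [hc0.ne]
      linarith
    unfold Dexpr
    apply div_pos
    · nlinarith
    · exact pow_pos (Epos hc1 t) 2
  refine ⟨?_, ⟨_, hDpos⟩, ?_⟩
  · intro t
    rw [hfG, hGderiv]
    exact (hasDerivG1 hc1 t).deriv
  · intro hcon
    have hA : 0 < Real.sin (Real.pi * α) / Real.pi :=
      div_pos (Real.sin_pos_of_pos_of_lt_pi (by positivity) (by nlinarith)) hpi
    have heq : (fun t : ℝ => Real.log
        (Real.sin (Real.pi * α) / Real.pi * (Real.exp t) ^ (α - 1) /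
          ((Real.exp t) ^ (2 * α) + 2 * (Real.exp t) ^ α * Real.cos (Real.pi * α) + 1)))
        = fun t => Real.log (Real.sin (Real.pi * α) / Real.pi)
            + (-t - Real.log (Efun α t)) := by
      funext t
      rw [mul_div_assoc, frac_eq hc1 t,
        Real.log_mul hA.ne' (div_pos (Real.exp_pos _) (Epos hc1 t)).ne',
        Real.log_div (Real.exp_ne_zero _) (Epos hc1 t).ne', Real.log_exp]
    rw [heq] at hcon
    have gcon : ConcaveOn ℝ Set.univ (fun t : ℝ => -t - Real.log (Efun α t)) := by
      have h2 := hcon.add (concaveOn_const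
        (-(Real.log (Real.sin (Real.pi * α) / Real.pi))) convex_univ)
      refine (h2.congr ?_)
      intro t _
      simp only [Pi.add_apply]
      ring
    have hanti := gcon.antitoneOn_deriv (fun x _ => (hasDerivG hc1 x).differentiableAt)
    rw [hGderiv] at hanti
    set T0 : ℝ := |2 * Real.log (4 / (-Real.cos (Real.pi * α)))| with hT0
    have hT0nn : 0 ≤ T0 := abs_nonneg _
    have hmono : StrictMonoOn (G1fun α) (Set.Icc T0 (T0 + 1)) := by
      apply strictMonoOn_of_deriv_pos (convex_Icc _ _)
      · apply Continuous.continuousOn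
        unfold G1fun
        refine continuous_const.sub (Continuous.div ?_ ?_ fun s => (Epos hc1 s).ne')
        · fun_prop
        · unfold Efun; fun_prop
      · intro x hx
        rw [interior_Icc] at hx
        rw [(hasDerivG1 hc1 x).deriv]
        apply hDpos
        have hx0 : 0 < x := lt_of_le_of_lt hT0nn hx.1
        rw [abs_of_pos hx0]
        calc 2 * Real.log (4 / (-Real.cos (Real.pi * α)))
            ≤ T0 := le_abs_self _
          _ ≤ x := le_of_lt hx.1
    have h1 := hmono (Set.left_mem_Icc.2 (by linarith)) (Set.right_mem_Icc.2 (by linarith))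
      (by linarith)
    have h2 := hanti (Set.mem_univ T0) (Set.mem_univ (T0 + 1)) (by linarith)
    linarith
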